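/- arXiv:0808.1813 — 6 statements merged into one kernel-verified Lean document; each statement's English description precedes it below -/
import Mathlib

section
/- Let Δ⁽ᵛ⁾ be a finite simplicial complex on vertex set V whose facets admit a shelling order F₁,…,Fᵣ, and suppose every facet Fᵢ satisfies |Fᵢ| ≤ |V| − 2. Then the reversed order of complements, V∖Fᵣ, …, V∖F₁, is a strong gcd-order: whenever i < j in this reversed order and (V∖Fᵢ) ∩ (V∖Fⱼ) = ∅, there exists k with k ≠ i appearing before position j such that V∖Fₖ ⊆ (V∖Fᵢ) ∪ (V∖Fⱼ). -/
open Finset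

/-- `Δ` is a simplicial complex on the vertex set `V`: every face is a subset
of `V` and the family is closed under taking subsets. -/
def IsComplex {α : Type*} (V : Finset α) (Δ : Set (Finset α)) : Prop :=
  (∀ F ∈ Δ, F ⊆ V) ∧ ∀ F ∈ Δ, ∀ G ⊆ F, G ∈ Δ

/-- `F` is a facet (maximal face) of `Δ`. -/
def IsFacet {α : Type*} (Δ : Set (Finset α)) (F : Finset α) : Prop :=
  F ∈ Δ ∧ ∀ G ∈ Δ, F ⊆ G → F = G

/-- `M` is a minimal non-face of the complex `Δ` on vertex set `V`. -/
def IsMinNonFace {α : Type*} (V : Finset α) (Δ : Set (Finset α)) (M : Finset α) : Prop :=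
  M ⊆ V ∧ M ∉ Δ ∧ ∀ N ⊂ M, N ∈ Δ

/-- The Alexander dual `Δ^∨ = {F ⊆ V : V \ F ∉ Δ}`. -/
def AlexanderDual {α : Type*} [DecidableEq α] (V : Finset α) (Δ : Set (Finset α)) :
    Set (Finset α) :=
  {F | F ⊆ V ∧ V \ F ∉ Δ}

/-- `G` is a face of the intersection complex `⟨F j⟩ ∩ ⟨F 0, …, F (j-1)⟩`. -/
def InInter {α : Type*} {r : ℕ} (F : Fin r → Finset α) (j : Fin r) (G : Finset α) : Prop :=
  G ⊆ F j ∧ ∃ i < j, G ⊆ F i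

/-- `F 0, …, F (r-1)` is a shelling order: for every `j ≥ 1` the intersection
complex `⟨F j⟩ ∩ ⟨F 0, …, F (j-1)⟩` is pure of dimension `dim (F j) - 1`, i.e.
every maximal face of it has cardinality `(F j).card - 1`. -/
def IsShellingOrder {α : Type*} {r : ℕ} (F : Fin r → Finset α) : Prop :=
  ∀ j : Fin r, 0 < j.val → ∀ H, InInter F j H →
    (∀ H', InInter F j H' → H ⊆ H' → H = H') → H.card = (F j).card - 1

/-- `M 0, …, M (r-1)` is a strong gcd-order: whenever `i < j` and
`M i ∩ M j = ∅`, there is `k` with `i < k ≠ j` and `M k ⊆ M i ∪ M j`. -/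
def IsStrongGcdOrder {α : Type*} [DecidableEq α] {r : ℕ} (M : Fin r → Finset α) : Prop :=
  ∀ i j : Fin r, i < j → M i ∩ M j = ∅ →
    ∃ k : Fin r, i < k ∧ k ≠ j ∧ M k ⊆ M i ∪ M j

/-- `F 0, …, F (r-1)` is a weak shelling order on vertex set `V`: whenever
`i < j` and `F i ∪ F j = V`, there is `k ≠ i` with `k < j` and
`F i ∩ F j ⊆ F k`. -/
def IsWeakShellingOrder {α : Type*} [DecidableEq α] (V : Finset α) {r : ℕ}
    (F : Fin r → Finset α) : Prop :=
  ∀ i j : Fin r, i < j → F i ∪ F j = V →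
    ∃ k : Fin r, k ≠ i ∧ k < j ∧ F i ∩ F j ⊆ F k

/-- If `F 0, …, F (r-1)` is a shelling order of the facets of a
simplicial complex on `V` with every facet of cardinality at most `|V| - 2`,
then the reversed order of complements `V \ F (r-1), …, V \ F 0` is a strong
gcd-order. -/
theorem stmt0 {α : Type*} [DecidableEq α] (V : Finset α) (Δ : Set (Finset α))
    (hΔ : IsComplex V Δ) {r : ℕ} (F : Fin r → Finset α)
    (hfacet : ∀ i, IsFacet Δ (F i)) (hinj : Function.Injective F)
    (hall : ∀ G, IsFacet Δ G → ∃ i, F i = G)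
    (hshell : IsShellingOrder F)
    (hcard : ∀ i, (F i).card ≤ V.card - 2) :
    IsStrongGcdOrder (fun p : Fin r => V \ F p.rev) := by
  intro i j hij hdisj
  simp only at hdisj ⊢
  set a := j.rev with ha
  set b := i.rev with hb
  have hab : a < b := Fin.rev_lt_rev.mpr hij
  have hFaV : F a ⊆ V := hΔ.1 _ (hfacet a).1
  have hFbV : F b ⊆ V := hΔ.1 _ (hfacet b).1
  have hunion : F a ∪ F b = V := by
    apply Finset.Subset.antisymm (Finset.union_subset hFaV hFbV)
    rw [← Finset.sdiff_eq_empty_iff_subset, Finset.sdiff_union_distrib, Finset.inter_comm]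
    exact hdisj
  set G := F a ∩ F b with hG
  set S : Set (Finset α) := {H | InInter F b H ∧ G ⊆ H} with hS
  have hGS : G ∈ S := ⟨⟨Finset.inter_subset_right, a, hab, Finset.inter_subset_left⟩,
    Finset.Subset.refl _⟩
  have hSfin : S.Finite := by
    apply Set.Finite.subset (F b).powerset.finite_toSet
    intro H hH
    simpa using hH.1.1
  obtain ⟨H, hHS, hHmax⟩ := hSfin.exists_maximal ⟨G, hGS⟩
  have hmax' : ∀ H', InInter F b H' → H ⊆ H' → H = H' := by
    intro H' hH' hsub
    exact Finset.Subset.antisymm hsub (hHmax ⟨hH', hHS.2.trans hsub⟩ hsub)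
  have hb0 : 0 < b.val := lt_of_le_of_lt (Nat.zero_le a.val) hab
  have hcardH : H.card = (F b).card - 1 := hshell b hb0 H hHS.1 hmax'
  obtain ⟨c, hcb, hHc⟩ := hHS.1.2
  by_cases hc : c = a
  · exfalso
    rw [hc] at hHc
    have hHG : H = G := Finset.Subset.antisymm
      (Finset.subset_inter hHc hHS.1.1) hHS.2
    have hVpos : 0 < V.card := by
      rcases Nat.eq_zero_or_pos V.card with h0 | h
      · exfalso
        have hV : V = ∅ := Finset.card_eq_zero.mp h0
        have h1 : F a = ∅ := Finset.subset_empty.mp (hV ▸ hFaV)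
        have h2 : F b = ∅ := Finset.subset_empty.mp (hV ▸ hFbV)
        exact absurd (hinj (h1.trans h2.symm)) hab.ne
      · exact h
    have hsum := Finset.card_union_add_card_inter (F a) (F b)
    rw [hunion] at hsum
    have h1 : G.card = (F b).card - 1 := hHG ▸ hcardH
    have h2 : G.card ≤ (F b).card := Finset.card_le_card Finset.inter_subset_right
    have h3 := hcard a
    rw [hG] at h1 h2
    have h4 := hcard b
    omega
  · refine ⟨c.rev, ?_, ?_, ?_⟩
    · rw [hb] at hcb
      have := Fin.rev_lt_rev.mpr hcb
      rwa [Fin.rev_rev] at this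
    · intro h
      apply hc
      rw [← Fin.rev_rev c, h, ha]
    · intro x hx
      rw [Fin.rev_rev, Finset.mem_sdiff] at hx
      have hxG : x ∉ G := fun hmem => hx.2 (hHc (hHS.2 hmem))
      rw [hG, Finset.mem_inter] at hxG
      rw [Finset.mem_union, Finset.mem_sdiff, Finset.mem_sdiff]
      by_cases hxa : x ∈ F a
      · exact Or.inl ⟨hx.1, fun hxb => hxG ⟨hxa, hxb⟩⟩
      · exact Or.inr ⟨hx.1, hxa⟩
end

section
/- If the Alexander dual Δ⁽ᵛ⁾ of a simplicial complex Δ (with no ghost vertices, i.e., every singleton {v} for v ∈ V is a face of Δ) is shellable, then Δ satisfies the strong gcd-condition. -/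
open Finset

/-- If the Alexander dual of `Δ` (a complex without ghost
vertices) is shellable, then `Δ` satisfies the strong gcd-condition. -/
theorem stmt1 {α : Type*} [DecidableEq α] (V : Finset α) (Δ : Set (Finset α))
    (hΔ : IsComplex V Δ) (hghost : ∀ v ∈ V, ({v} : Finset α) ∈ Δ)
    (hshellable : ∃ (r : ℕ) (F : Fin r → Finset α),
      Function.Injective F ∧ (∀ i, IsFacet (AlexanderDual V Δ) (F i)) ∧
      (∀ G, IsFacet (AlexanderDual V Δ) G → ∃ i, F i = G) ∧
      IsShellingOrder F) :
    ∃ (r : ℕ) (M : Fin r → Finset α),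
      Function.Injective M ∧ (∀ i, IsMinNonFace V Δ (M i)) ∧
      (∀ N, IsMinNonFace V Δ N → ∃ i, M i = N) ∧
      IsStrongGcdOrder M := by
  classical
  obtain ⟨r, F, hFinj, hFfacet, hFsurj, hshell⟩ := hshellable
  have hFsubV : ∀ i, F i ⊆ V := fun i => (hFfacet i).1.1
  have hFnd : ∀ i, V \ F i ∉ Δ := fun i => (hFfacet i).1.2
  -- weak shelling property
  have hweak : ∀ i j : Fin r, i < j → F i ∪ F j = V →
      ∃ k : Fin r, k ≠ i ∧ k < j ∧ F i ∩ F j ⊆ F k := by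
    intro i j hij hunion
    set G := F i ∩ F j with hGdef
    have hGin : InInter F j G := ⟨inter_subset_right, i, hij, inter_subset_left⟩
    set s : Finset (Finset α) :=
      (F j).powerset.filter (fun H => InInter F j H ∧ G ⊆ H) with hsdef
    have hmem : ∀ H, H ∈ s ↔ InInter F j H ∧ G ⊆ H := by
      intro H
      simp only [hsdef, mem_filter, mem_powerset, and_iff_right_iff_imp]
      exact fun h => h.1.1
    have hsne : s.Nonempty := ⟨G, (hmem G).2 ⟨hGin, subset_rfl⟩⟩
    obtain ⟨H, hHs, hHmax⟩ := s.exists_max_image card hsne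
    obtain ⟨hHin, hGH⟩ := (hmem H).1 hHs
    have hHmaximal : ∀ H', InInter F j H' → H ⊆ H' → H = H' := by
      intro H' hH'in hHH'
      have hH's : H' ∈ s := (hmem H').2 ⟨hH'in, hGH.trans hHH'⟩
      exact eq_of_subset_of_card_le hHH' (hHmax H' hH's)
    have hjpos : 0 < j.val := lt_of_le_of_lt (Nat.zero_le _) hij
    have hcard : H.card = (F j).card - 1 := hshell j hjpos H hHin hHmaximal
    by_cases hk : ∃ k : Fin r, k ≠ i ∧ k < j ∧ H ⊆ F k
    · obtain ⟨k, hki, hkj, hHk⟩ := hk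
      exact ⟨k, hki, hkj, hGH.trans hHk⟩
    · exfalso
      push_neg at hk
      obtain ⟨k, hkj, hHk⟩ := hHin.2
      by_cases hki : k = i
      · subst hki
        have hHG : H ⊆ G := subset_inter hHk hHin.1
        have hHeqG : H = G := le_antisymm hHG hGH
        -- G = F k ∩ F j has card (F j).card - 1 : derive contradiction
        have hGnej : G ≠ F j := by
          intro h
          have hsub : F j ⊆ F k := h ▸ inter_subset_left
          have := (hFfacet j).2 (F k) (hFfacet k).1 hsub
          exact absurd (hFinj this.symm) hkj.ne
        have hGss : G ⊂ F j := ssubset_of_subset_of_ne inter_subset_right hGnej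
        have hlt : G.card < (F j).card := card_lt_card hGss
        have hcardG : G.card = (F j).card - 1 := hHeqG ▸ hcard
        have hone : (F j \ G).card = 1 := by
          rw [card_sdiff_of_subset inter_subset_right, ← hGdef]
          omega
        obtain ⟨x, hx⟩ := card_eq_one.mp hone
        have hxj : x ∈ F j := by
          have : x ∈ F j \ G := hx ▸ mem_singleton_self x
          exact (mem_sdiff.mp this).1
        have hxG : x ∉ G := by
          have : x ∈ F j \ G := hx ▸ mem_singleton_self x
          exact (mem_sdiff.mp this).2
        have hxi : x ∉ F k := fun h => hxG (mem_inter.mpr ⟨h, hxj⟩)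
        have hxV : x ∈ V := hFsubV j hxj
        -- F k = V \ {x}
        have hFk : V \ F k = {x} := by
          apply Finset.ext
          intro v
          simp only [mem_sdiff, mem_singleton]
          constructor
          · rintro ⟨hvV, hvFk⟩
            by_contra hvx
            have hvj : v ∈ F j := by
              have : v ∈ F k ∪ F j := hunion ▸ hvV
              rcases mem_union.mp this with h | h
              · exact absurd h hvFk
              · exact h
            have : v ∈ F j \ G → v = x := by
              intro h; rw [hx] at h; exact mem_singleton.mp h
            have hvG : v ∈ G := by
              by_contra hvG
              exact hvx (this (mem_sdiff.mpr ⟨hvj, hvG⟩))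
            exact hvFk (mem_inter.mp hvG).1
          · rintro rfl
            exact ⟨hxV, hxi⟩
        have : ({x} : Finset α) ∉ Δ := hFk ▸ hFnd k
        exact this (hghost x hxV)
      · exact hk k hki hkj hHk
  -- the minimal non-faces, in reverse order of the complements
  refine ⟨r, fun a => V \ F a.rev, ?_, ?_, ?_, ?_⟩
  · intro a b hab
    have : F a.rev = F b.rev := by
      have h1 : V \ (V \ F a.rev) = V \ (V \ F b.rev) := congrArg (fun s => V \ s) hab
      rwa [Finset.sdiff_sdiff_eq_self (hFsubV a.rev),
        Finset.sdiff_sdiff_eq_self (hFsubV b.rev)] at h1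
    exact Fin.rev_injective (hFinj this)
  · -- each V \ F i is a minimal non-face
    intro a
    refine ⟨sdiff_subset, hFnd a.rev, ?_⟩
    intro N hN
    replace hN : N ⊂ V \ F a.rev := hN
    by_contra hNΔ
    -- then V \ N is in the dual and strictly contains F a.rev
    have hNV : N ⊆ V := hN.subset.trans sdiff_subset
    have hVN : V \ N ∈ AlexanderDual V Δ := by
      refine ⟨sdiff_subset, ?_⟩
      rwa [Finset.sdiff_sdiff_eq_self hNV]
    have hsub : F a.rev ⊆ V \ N := by
      intro v hv
      refine mem_sdiff.mpr ⟨hFsubV a.rev hv, fun hvN => ?_⟩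
      exact (mem_sdiff.mp (hN.subset hvN)).2 hv
    have heq := (hFfacet a.rev).2 (V \ N) hVN hsub
    have : N = V \ F a.rev := by
      rw [heq, Finset.sdiff_sdiff_eq_self hNV]
    exact hN.ne this
  · -- surjectivity onto minimal non-faces
    intro N hN
    obtain ⟨hNV, hNnd, hNmin⟩ := hN
    have hfac : IsFacet (AlexanderDual V Δ) (V \ N) := by
      refine ⟨⟨sdiff_subset, by rwa [Finset.sdiff_sdiff_eq_self hNV]⟩, ?_⟩
      intro G hG hsub
      have hGV : G ⊆ V := hG.1
      have hVGN : V \ G ⊆ N := by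
        intro v hv
        obtain ⟨hvV, hvG⟩ := mem_sdiff.mp hv
        by_contra hvN
        exact hvG (hsub (mem_sdiff.mpr ⟨hvV, hvN⟩))
      have : V \ G = N := by
        by_contra hne
        exact hG.2 (hNmin _ (ssubset_of_subset_of_ne hVGN hne))
      rw [← this, Finset.sdiff_sdiff_eq_self hGV]
    obtain ⟨i, hi⟩ := hFsurj _ hfac
    refine ⟨i.rev, ?_⟩
    show V \ F i.rev.rev = N
    rw [Fin.rev_rev, hi, Finset.sdiff_sdiff_eq_self hNV]
  · -- strong gcd order
    intro a b hab hdisj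
    replace hdisj : (V \ F a.rev) ∩ (V \ F b.rev) = ∅ := hdisj
    have hij : b.rev < a.rev := Fin.rev_lt_rev.mpr hab
    have hunion : F b.rev ∪ F a.rev = V := by
      apply subset_antisymm (union_subset (hFsubV _) (hFsubV _))
      intro v hv
      by_contra hvn
      rw [mem_union, not_or] at hvn
      have : v ∈ (V \ F a.rev) ∩ (V \ F b.rev) :=
        mem_inter.mpr ⟨mem_sdiff.mpr ⟨hv, hvn.2⟩, mem_sdiff.mpr ⟨hv, hvn.1⟩⟩
      rw [hdisj] at this
      exact notMem_empty v this
    obtain ⟨k, hki, hkj, hsub⟩ := hweak b.rev a.rev hij hunion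
    refine ⟨k.rev, ?_, ?_, ?_⟩
    · have := Fin.rev_lt_rev.mpr hkj
      rwa [Fin.rev_rev] at this
    · intro h
      exact hki (by rw [← Fin.rev_rev k, h])
    · intro v hv
      obtain ⟨hvV, hvFk⟩ := mem_sdiff.mp hv
      rw [Fin.rev_rev] at hvFk
      by_contra hvn
      rw [mem_union, not_or, mem_sdiff, mem_sdiff, not_and, not_and, not_not, not_not] at hvn
      exact hvFk (hsub (mem_inter.mpr ⟨hvn.2 hvV, hvn.1 hvV⟩))
end

section
/- Let Δ be a simplicial complex on vertex set V with minimal non-faces M₁,…,Mᵣ and let Fᵢ = V∖Mᵢ be the facets of Δ⁽ᵛ⁾. Then the order M₁,…,Mᵣ is a strong gcd-order for Δ if and only if the reversed order Fᵣ, F_{r−1}, …, F₁ is a weak shelling order for Δ⁽ᵛ⁾. -/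
open Finset

/-- `M 0, …, M (r-1)` is a strong gcd-order for `Δ` iff the
reversed order of the facets `F i = V \ M i` of the Alexander dual is a weak
shelling order. -/
theorem stmt3 {α : Type*} [DecidableEq α] (V : Finset α) (Δ : Set (Finset α))
    (hΔ : IsComplex V Δ) {r : ℕ} (M : Fin r → Finset α)
    (hinj : Function.Injective M) (hmin : ∀ i, IsMinNonFace V Δ (M i))
    (hall : ∀ N, IsMinNonFace V Δ N → ∃ i, M i = N) :
    IsStrongGcdOrder M ↔
      IsWeakShellingOrder V (fun p : Fin r => V \ M p.rev) := by
  have hsub : ∀ i, M i ⊆ V := fun i => (hmin i).1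
  constructor
  · intro hs i j hij hU
    have hdisj : M j.rev ∩ M i.rev = ∅ := by
      apply eq_empty_of_forall_notMem
      intro x hx
      have hx1 := mem_inter.mp hx
      have hxV : x ∈ V := hsub j.rev hx1.1
      have hxU : x ∈ (V \ M i.rev) ∪ (V \ M j.rev) := by rw [hU]; exact hxV
      simp only [mem_union, mem_sdiff] at hxU
      rcases hxU with ⟨_, h⟩ | ⟨_, h⟩
      · exact h hx1.2
      · exact h hx1.1
    obtain ⟨k', hk1, hk2, hk3⟩ := hs j.rev i.rev (by simpa using hij) hdisj
    refine ⟨k'.rev, ?_, ?_, ?_⟩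
    · intro h
      exact hk2 (by rw [← h, Fin.rev_rev])
    · rw [← Fin.rev_rev j]; exact Fin.rev_lt_rev.mpr hk1
    · intro x hx
      simp only [mem_inter, mem_sdiff, Fin.rev_rev] at hx ⊢
      obtain ⟨⟨hxV, hxi⟩, _, hxj⟩ := hx
      refine ⟨hxV, fun hxk => ?_⟩
      rcases mem_union.mp (hk3 hxk) with h | h
      · exact hxj h
      · exact hxi h
  · intro hw i j hij hdisj
    have hU : (V \ M j.rev.rev) ∪ (V \ M i.rev.rev) = V := by
      rw [Fin.rev_rev, Fin.rev_rev, ← sdiff_inter_distrib_right]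
      rw [inter_comm, hdisj, sdiff_empty]
    obtain ⟨k, hk1, hk2, hk3⟩ := hw j.rev i.rev (by simpa using hij) hU
    refine ⟨k.rev, by rw [← Fin.rev_rev i]; exact Fin.rev_lt_rev.mpr hk2, ?_, ?_⟩
    · intro h
      exact hk1 (by rw [← h, Fin.rev_rev])
    · intro x hx
      have hxV : x ∈ V := hsub k.rev hx
      by_contra hxu
      simp only [mem_union, not_or] at hxu
      have : x ∈ V \ M k.rev := hk3 (by
        simp only [mem_inter, mem_sdiff, Fin.rev_rev]
        exact ⟨⟨hxV, hxu.2⟩, hxV, hxu.1⟩)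
      exact (mem_sdiff.mp this).2 hx
end

section
/- Let Δ be a simplicial complex on vertex set V such that every face F ∈ Δ satisfies |F| ≤ |V| − 2. Then any shelling order of the facets of Δ is also a weak shelling order. -/
open Finset

/-- If every face of `Δ` has cardinality at most `|V| - 2`, then
any shelling order of the facets of `Δ` is a weak shelling order. -/
theorem stmt4 {α : Type*} [DecidableEq α] (V : Finset α) (Δ : Set (Finset α))
    (hΔ : IsComplex V Δ) (hsmall : ∀ G ∈ Δ, G.card ≤ V.card - 2)
    {r : ℕ} (F : Fin r → Finset α)
    (hfacet : ∀ i, IsFacet Δ (F i)) (hinj : Function.Injective F)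
    (hall : ∀ G, IsFacet Δ G → ∃ i, F i = G)
    (hshell : IsShellingOrder F) :
    IsWeakShellingOrder V F := by
  classical
  intro i j hij hV
  set G := F i ∩ F j with hGdef
  -- the set of faces of the intersection complex containing G
  set S : Finset (Finset α) :=
    (F j).powerset.filter (fun H => G ⊆ H ∧ ∃ i' : Fin r, i' < j ∧ H ⊆ F i') with hSdef
  have hGS : G ∈ S := by
    simp only [hSdef, mem_filter, mem_powerset]
    exact ⟨inter_subset_right, le_refl _, i, hij, inter_subset_left⟩
  obtain ⟨H, hHS, hHmax⟩ := S.exists_max_image Finset.card ⟨G, hGS⟩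
  simp only [hSdef, mem_filter, mem_powerset] at hHS
  obtain ⟨hHj, hGH, i', hi'j, hHi'⟩ := hHS
  have hHinter : InInter F j H := ⟨hHj, i', hi'j, hHi'⟩
  have hmax : ∀ H', InInter F j H' → H ⊆ H' → H = H' := by
    intro H' hH' hsub
    obtain ⟨hH'j, k, hkj, hH'k⟩ := hH'
    have hH'S : H' ∈ S := by
      simp only [hSdef, mem_filter, mem_powerset]
      exact ⟨hH'j, hGH.trans hsub, k, hkj, hH'k⟩
    exact Finset.eq_of_subset_of_card_le hsub (hHmax H' hH'S)
  have hjpos : 0 < j.val := lt_of_le_of_lt (Nat.zero_le _) hij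
  have hcard : H.card = (F j).card - 1 := hshell j hjpos H hHinter hmax
  by_cases hii' : i' = i
  · -- then H = G, leading to a cardinality contradiction
    exfalso
    rw [hii'] at hHi'
    have hHG : H = G := (subset_inter hHi' hHj).antisymm hGH
    have hVcard : 1 ≤ V.card := by
      rcases Nat.eq_zero_or_pos V.card with h0 | h; swap; · exact h
      have hVe : V = ∅ := card_eq_zero.mp h0
      have hi0 : F i = ∅ := subset_empty.mp (hVe ▸ hΔ.1 _ (hfacet i).1)
      have hj0 : F j = ∅ := subset_empty.mp (hVe ▸ hΔ.1 _ (hfacet j).1)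
      exact absurd (hinj (hi0.trans hj0.symm)) (Fin.ne_of_lt hij)
    have hunion : (F i ∪ F j).card + G.card = (F i).card + (F j).card := by
      rw [hGdef]; exact Finset.card_union_add_card_inter _ _
    rw [hV] at hunion
    have hGle : G.card ≤ (F j).card := card_le_card inter_subset_right
    have hGcard : G.card = (F j).card - 1 := by rw [← hHG]; exact hcard
    have hFi : (F i).card ≤ V.card - 2 := hsmall _ (hfacet i).1
    have hFj : (F j).card ≤ V.card - 2 := hsmall _ (hfacet j).1
    clear_value G S
    omega
  · exact ⟨i', hii', hi'j, hGH.trans hHi'⟩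
end

section
/- Let Δ₃ be the simplicial complex on vertex set {0,1,…,9} whose minimal non-faces are M₁={0,1,5,6}, M₂={1,2,6,7}, M₃={2,3,7,8}, M₄={3,4,8,9}, M₅={0,4,5,9}, M₆={5,6,7,8,9}. Then no linear order of these six sets is a strong gcd-order; i.e., Δ₃ does not satisfy the strong gcd-condition. -/
open Finset

def mnf14 : Fin 6 → Finset ℕ :=
  ![{0,1,5,6}, {1,2,6,7}, {2,3,7,8}, {3,4,8,9}, {0,4,5,9}, {5,6,7,8,9}]

lemma key (σ : Equiv.Perm (Fin 6)) (h : IsStrongGcdOrder (mnf14 ∘ σ))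
    (v a b : Fin 6) (hab : a ≠ b)
    (hd : mnf14 a ∩ mnf14 b = ∅)
    (hu : ∀ s : Fin 6, s ≠ a → s ≠ b → mnf14 s ⊆ mnf14 a ∪ mnf14 b → s = v)
    (hva : σ.symm v ≤ σ.symm a) (hvb : σ.symm v ≤ σ.symm b)
    (hna : v ≠ a) (hnb : v ≠ b) : False := by
  have hva' : σ.symm v < σ.symm a :=
    lt_of_le_of_ne hva (fun e => hna (σ.symm.injective e))
  have hvb' : σ.symm v < σ.symm b :=
    lt_of_le_of_ne hvb (fun e => hnb (σ.symm.injective e))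
  have hij : σ.symm a ≠ σ.symm b := fun e => hab (σ.symm.injective e)
  rcases lt_or_gt_of_ne hij with hlt | hgt
  · obtain ⟨k, hik, hkj, hsub⟩ := h (σ.symm a) (σ.symm b) hlt (by
      simp only [Function.comp, Equiv.apply_symm_apply]; exact hd)
    simp only [Function.comp, Equiv.apply_symm_apply] at hsub
    have hka : σ k ≠ a := fun e => absurd (e ▸ (Equiv.symm_apply_apply σ k).symm) (by
      intro e'; exact absurd (e' ▸ hik) (lt_irrefl _))
    have hkb : σ k ≠ b := fun e => hkj (by rw [← e, Equiv.symm_apply_apply])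
    have := hu (σ k) hka hkb hsub
    have : k = σ.symm v := by rw [← this, Equiv.symm_apply_apply]
    exact absurd (this ▸ hik) (by exact fun h' => absurd (hva'.trans h') (lt_irrefl _))
  · obtain ⟨k, hik, hkj, hsub⟩ := h (σ.symm b) (σ.symm a) hgt (by
      simp only [Function.comp, Equiv.apply_symm_apply, inter_comm]; exact hd)
    simp only [Function.comp, Equiv.apply_symm_apply] at hsub
    rw [union_comm] at hsub
    have hkb : σ k ≠ b := fun e => absurd (e ▸ (Equiv.symm_apply_apply σ k).symm) (by
      intro e'; exact absurd (e' ▸ hik) (lt_irrefl _))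
    have hka : σ k ≠ a := fun e => hkj (by rw [← e, Equiv.symm_apply_apply])
    have := hu (σ k) hka hkb hsub
    have : k = σ.symm v := by rw [← this, Equiv.symm_apply_apply]
    exact absurd (this ▸ hik) (by exact fun h' => absurd (hvb'.trans h') (lt_irrefl _))

/-- no linear order of the six minimal non-faces of `Δ₃` is a
strong gcd-order; i.e. `Δ₃` does not satisfy the strong gcd-condition. -/
theorem stmt14 :
    ∀ σ : Equiv.Perm (Fin 6), ¬ IsStrongGcdOrder (mnf14 ∘ σ) := by
  intro σ h
  obtain ⟨v, hv, hmin⟩ := Finset.exists_min_image ({0,1,2,3,4} : Finset (Fin 6))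
    (fun w => σ.symm w) ⟨0, by decide⟩
  fin_cases hv
  · exact key σ h 0 4 1 (by decide) (by decide) (by decide)
      (hmin 4 (by decide)) (hmin 1 (by decide)) (by decide) (by decide)
  · exact key σ h 1 0 2 (by decide) (by decide) (by decide)
      (hmin 0 (by decide)) (hmin 2 (by decide)) (by decide) (by decide)
  · exact key σ h 2 1 3 (by decide) (by decide) (by decide)
      (hmin 1 (by decide)) (hmin 3 (by decide)) (by decide) (by decide)
  · exact key σ h 3 2 4 (by decide) (by decide) (by decide)
      (hmin 2 (by decide)) (hmin 4 (by decide)) (by decide) (by decide)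
  · exact key σ h 4 3 0 (by decide) (by decide) (by decide)
      (hmin 3 (by decide)) (hmin 0 (by decide)) (by decide) (by decide)
end

section
/- For a flag complex Δ (with no ghost vertices), Δ satisfies the strong gcd-condition if and only if the Alexander dual Δ⁽ᵛ⁾ is shellable. -/
open Finset

section Helpers

variable {α : Type*} [DecidableEq α]

lemma exists_minNonFace (V : Finset α) (Δ : Set (Finset α)) :
    ∀ S : Finset α, S ⊆ V → S ∉ Δ → ∃ M, M ⊆ S ∧ IsMinNonFace V Δ M := by
  intro S
  induction S using Finset.strongInduction with
  | _ S ih =>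
    intro hSV hSΔ
    by_cases h : ∀ N ⊂ S, N ∈ Δ
    · exact ⟨S, Finset.Subset.refl S, hSV, hSΔ, h⟩
    · push_neg at h
      obtain ⟨N, hNS, hNΔ⟩ := h
      obtain ⟨M, hMN, hM⟩ := ih N hNS (hNS.subset.trans hSV) hNΔ
      exact ⟨M, hMN.trans hNS.subset, hM⟩

lemma dual_facet_iff (V : Finset α) (Δ : Set (Finset α)) (G : Finset α) :
    IsFacet (AlexanderDual V Δ) G ↔ ∃ M, IsMinNonFace V Δ M ∧ G = V \ M := by
  constructor
  · rintro ⟨⟨hGV, hG⟩, hmax⟩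
    obtain ⟨M, hMsub, hM⟩ := exists_minNonFace V Δ (V \ G) (Finset.sdiff_subset) hG
    have hGM : G ⊆ V \ M := by
      intro x hx
      exact Finset.mem_sdiff.mpr ⟨hGV hx, fun hxM => (Finset.mem_sdiff.mp (hMsub hxM)).2 hx⟩
    have hdual : V \ M ∈ AlexanderDual V Δ := by
      refine ⟨Finset.sdiff_subset, ?_⟩
      rw [Finset.sdiff_sdiff_eq_self hM.1]; exact hM.2.1
    exact ⟨M, hM, hmax _ hdual hGM⟩
  · rintro ⟨M, hM, rfl⟩
    refine ⟨⟨Finset.sdiff_subset, by rw [Finset.sdiff_sdiff_eq_self hM.1]; exact hM.2.1⟩, ?_⟩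
    rintro G ⟨hGV, hG⟩ hsub
    have h1 : V \ G ⊆ M := by
      intro x hx
      rcases Finset.mem_sdiff.mp hx with ⟨hxV, hxG⟩
      by_contra hxM
      exact hxG (hsub (Finset.mem_sdiff.mpr ⟨hxV, hxM⟩))
    have h2 : V \ G = M := by
      by_contra hne
      exact hG (hM.2.2 _ (lt_of_le_of_ne h1 hne))
    calc V \ M = V \ (V \ G) := by rw [h2]
    _ = G := Finset.sdiff_sdiff_eq_self hGV

lemma exists_maximal_inInter {r : ℕ} (F : Fin r → Finset α) (j : Fin r) (H : Finset α)
    (h : InInter F j H) :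
    ∃ H', InInter F j H' ∧ H ⊆ H' ∧ ∀ H'', InInter F j H'' → H' ⊆ H'' → H' = H'' := by
  classical
  let S : Finset (Finset α) := (F j).powerset.filter (fun G => InInter F j G ∧ H ⊆ G)
  have hHS : H ∈ S := Finset.mem_filter.mpr ⟨Finset.mem_powerset.mpr h.1, h, Finset.Subset.refl H⟩
  obtain ⟨H', hH'S, hmax⟩ := S.exists_max_image Finset.card ⟨H, hHS⟩
  rcases Finset.mem_filter.mp hH'S with ⟨-, hH', hHH'⟩
  refine ⟨H', hH', hHH', fun H'' h'' hsub => ?_⟩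
  have hmem : H'' ∈ S :=
    Finset.mem_filter.mpr ⟨Finset.mem_powerset.mpr h''.1, h'', hHH'.trans hsub⟩
  exact Finset.eq_of_subset_of_card_le hsub (hmax _ hmem)

lemma maximal_inInter_eq {r : ℕ} {F : Fin r → Finset α} {j : Fin r} {H : Finset α}
    (h : InInter F j H) (hmax : ∀ H', InInter F j H' → H ⊆ H' → H = H') :
    ∃ i, i < j ∧ H = F i ∩ F j := by
  obtain ⟨hHj, i, hij, hHi⟩ := h
  exact ⟨i, hij, hmax _ ⟨Finset.inter_subset_right, i, hij, Finset.inter_subset_left⟩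
    (Finset.subset_inter hHi hHj)⟩

lemma pair_union_card_three {A B : Finset α} (hA : A.card = 2) (hB : B.card = 2)
    (hne : A ≠ B) (hint : A ∩ B ≠ ∅) : (A ∪ B).card = 3 := by
  have h1 : 1 ≤ (A ∩ B).card := Finset.card_pos.mpr (Finset.nonempty_iff_ne_empty.mpr hint)
  have h2 : (A ∩ B).card ≤ 2 := by
    calc (A ∩ B).card ≤ A.card := Finset.card_le_card Finset.inter_subset_left
    _ = 2 := hA
  have h3 : (A ∩ B).card ≠ 2 := by
    intro hc
    have hABA : A ∩ B = A :=
      Finset.eq_of_subset_of_card_le Finset.inter_subset_left (by omega)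
    have hAB : A ⊆ B := by rw [← hABA]; exact Finset.inter_subset_right
    exact hne (Finset.eq_of_subset_of_card_le hAB (by omega))
  have h4 := Finset.card_union_add_card_inter A B
  omega

lemma weak_to_shelling {V : Finset α} {r : ℕ} {M : Fin r → Finset α}
    (hMV : ∀ i, M i ⊆ V) (hM2 : ∀ i, (M i).card = 2) (hinj : Function.Injective M)
    (hw : IsWeakShellingOrder V (fun i => V \ M i)) :
    IsShellingOrder (fun i => V \ M i) := by
  intro j hj H hH hmax
  set F : Fin r → Finset α := fun i => V \ M i with hF
  obtain ⟨i, hij, rfl⟩ := maximal_inInter_eq hH hmax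
  have hFij : F i ∩ F j = V \ (M i ∪ M j) := (Finset.sdiff_union_distrib V (M i) (M j)).symm
  have hinterne : M i ∩ M j ≠ ∅ := by
    intro hdisj
    have hUnion : F i ∪ F j = V := by
      ext x
      simp only [hF, Finset.mem_union, Finset.mem_sdiff]
      constructor
      · rintro (⟨h, _⟩ | ⟨h, _⟩) <;> exact h
      · intro hxV
        by_cases hxi : x ∈ M i
        · exact Or.inr ⟨hxV, fun hxj =>
            (Finset.eq_empty_iff_forall_notMem.mp hdisj x) (Finset.mem_inter.mpr ⟨hxi, hxj⟩)⟩
        · exact Or.inl ⟨hxV, hxi⟩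
    obtain ⟨k, hki, hkj, hsub⟩ := hw i j hij hUnion
    have h1 : F i ∩ F j ⊆ F k ∩ F j := Finset.subset_inter hsub Finset.inter_subset_right
    have h2 : F i ∩ F j = F k ∩ F j :=
      hmax _ ⟨Finset.inter_subset_right, k, hkj, Finset.inter_subset_left⟩ h1
    have hFkj : F k ∩ F j = V \ (M k ∪ M j) := (Finset.sdiff_union_distrib V (M k) (M j)).symm
    have hsets : M i ∪ M j = M k ∪ M j := by
      have e : V \ (M i ∪ M j) = V \ (M k ∪ M j) := by rw [← hFij, ← hFkj, h2]
      have e2 := congrArg (fun S => V \ S) e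
      simpa [Finset.sdiff_sdiff_eq_self (Finset.union_subset (hMV i) (hMV j)),
        Finset.sdiff_sdiff_eq_self (Finset.union_subset (hMV k) (hMV j))] using e2
    have hMk : M k ⊆ M i ∪ M j := by rw [hsets]; exact Finset.subset_union_left
    by_cases hkj2 : M k ∩ M j = ∅
    · have hMki : M k ⊆ M i := by
        intro x hx
        rcases Finset.mem_union.mp (hMk hx) with h | h
        · exact h
        · exact absurd (Finset.mem_inter.mpr ⟨hx, h⟩) (by simp [hkj2])
      have hMkMi : M k = M i :=
        Finset.eq_of_subset_of_card_le hMki (by rw [hM2, hM2])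
      exact hki (hinj hMkMi)
    · have hkinej : M k ≠ M j := fun e => (Fin.ne_of_lt hkj) (hinj e)
      have c1 : (M k ∪ M j).card = 3 := pair_union_card_three (hM2 k) (hM2 j) hkinej hkj2
      have c2 : (M i ∪ M j).card = 4 := by
        rw [Finset.card_union_of_disjoint (Finset.disjoint_iff_inter_eq_empty.mpr hdisj),
          hM2, hM2]
      rw [hsets] at c2
      omega
  have hij' : M i ≠ M j := fun e => (Fin.ne_of_lt hij) (hinj e)
  have hcard3 : (M i ∪ M j).card = 3 := pair_union_card_three (hM2 i) (hM2 j) hij' hinterne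
  have hsubV : M i ∪ M j ⊆ V := Finset.union_subset (hMV i) (hMV j)
  have hFjc : (F j).card = V.card - 2 := by
    simp only [hF]; rw [Finset.card_sdiff_of_subset (hMV j), hM2]
  have hV3 : 3 ≤ V.card := hcard3 ▸ Finset.card_le_card hsubV
  rw [hFij, Finset.card_sdiff_of_subset hsubV, hcard3, hFjc]
  omega

lemma shelling_to_weak {V : Finset α} {r : ℕ} {M : Fin r → Finset α}
    (hMV : ∀ i, M i ⊆ V) (hM2 : ∀ i, (M i).card = 2) (hinj : Function.Injective M)
    (hs : IsShellingOrder (fun i => V \ M i)) :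
    IsWeakShellingOrder V (fun i => V \ M i) := by
  intro i j hij hUnion
  set F : Fin r → Finset α := fun i => V \ M i with hF
  have hdisj : M i ∩ M j = ∅ := by
    ext x
    simp only [Finset.mem_inter, Finset.notMem_empty, iff_false]
    rintro ⟨hxi, hxj⟩
    have hxV : x ∈ V := hMV i hxi
    rw [← hUnion] at hxV
    rcases Finset.mem_union.mp hxV with h | h
    · exact (Finset.mem_sdiff.mp h).2 hxi
    · exact (Finset.mem_sdiff.mp h).2 hxj
  have hc4 : (M i ∪ M j).card = 4 := by
    rw [Finset.card_union_of_disjoint (Finset.disjoint_iff_inter_eq_empty.mpr hdisj), hM2, hM2]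
  have hsubV : M i ∪ M j ⊆ V := Finset.union_subset (hMV i) (hMV j)
  have hV4 : 4 ≤ V.card := hc4 ▸ Finset.card_le_card hsubV
  have h0 : InInter F j (F i ∩ F j) :=
    ⟨Finset.inter_subset_right, i, hij, Finset.inter_subset_left⟩
  obtain ⟨H, hH, hHsub, hHmax⟩ := exists_maximal_inInter F j _ h0
  have hj0 : 0 < j.val := lt_of_le_of_lt (Nat.zero_le _) hij
  have hcardH : H.card = (F j).card - 1 := hs j hj0 H hH hHmax
  obtain ⟨hHj, k, hkj, hHk⟩ := hH
  refine ⟨k, ?_, hkj, hHsub.trans hHk⟩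
  rintro rfl
  have hHeq : H = F k ∩ F j := Finset.Subset.antisymm (Finset.subset_inter hHk hHj) hHsub
  have hHc : H.card = V.card - 4 := by
    rw [hHeq]
    have e : F k ∩ F j = V \ (M k ∪ M j) := (Finset.sdiff_union_distrib V (M k) (M j)).symm
    rw [e, Finset.card_sdiff_of_subset hsubV, hc4]
  have hFjc : (F j).card = V.card - 2 := by
    simp only [hF]; rw [Finset.card_sdiff_of_subset (hMV j), hM2]
  omega

lemma gcd_to_weak {V : Finset α} {r : ℕ} {M : Fin r → Finset α}
    (hMV : ∀ i, M i ⊆ V) (hg : IsStrongGcdOrder M) :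
    IsWeakShellingOrder V (fun j => V \ M j.rev) := by
  intro i j hij hUnion
  have hrev : j.rev < i.rev := Fin.rev_lt_rev.mpr hij
  have hdisj : M j.rev ∩ M i.rev = ∅ := by
    ext x
    simp only [Finset.mem_inter, Finset.notMem_empty, iff_false]
    rintro ⟨hxj, hxi⟩
    have hxV : x ∈ V := hMV _ hxj
    rw [← hUnion] at hxV
    rcases Finset.mem_union.mp hxV with h | h
    · exact (Finset.mem_sdiff.mp h).2 hxi
    · exact (Finset.mem_sdiff.mp h).2 hxj
  obtain ⟨k, hk1, hk2, hk3⟩ := hg j.rev i.rev hrev hdisj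
  refine ⟨k.rev, ?_, ?_, ?_⟩
  · intro e; apply hk2; rw [← Fin.rev_rev k, e]
  · have h := Fin.rev_lt_rev.mpr hk1
    rwa [Fin.rev_rev] at h
  · intro x hx
    simp only [Finset.mem_inter, Finset.mem_sdiff] at hx
    obtain ⟨⟨hxV, hxi⟩, _, hxj⟩ := hx
    simp only [Finset.mem_sdiff, Fin.rev_rev]
    exact ⟨hxV, fun hxk => (Finset.mem_union.mp (hk3 hxk)).elim hxj hxi⟩

lemma weak_to_gcd {V : Finset α} {r : ℕ} {M : Fin r → Finset α}
    (hMV : ∀ i, M i ⊆ V)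
    (hw : IsWeakShellingOrder V (fun j => V \ M j.rev)) :
    IsStrongGcdOrder M := by
  intro i j hij hdisj
  have hrev : j.rev < i.rev := Fin.rev_lt_rev.mpr hij
  have hU : (fun j : Fin r => V \ M j.rev) j.rev ∪ (fun j : Fin r => V \ M j.rev) i.rev = V := by
    simp only [Fin.rev_rev]
    ext x
    simp only [Finset.mem_union, Finset.mem_sdiff]
    constructor
    · rintro (⟨h, _⟩ | ⟨h, _⟩) <;> exact h
    · intro hxV
      by_cases hxj : x ∈ M j
      · exact Or.inr ⟨hxV, fun hxi =>
          (Finset.eq_empty_iff_forall_notMem.mp hdisj x) (Finset.mem_inter.mpr ⟨hxi, hxj⟩)⟩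
      · exact Or.inl ⟨hxV, hxj⟩
  obtain ⟨k, hk1, hk2, hk3⟩ := hw j.rev i.rev hrev hU
  refine ⟨k.rev, ?_, ?_, ?_⟩
  · have h := Fin.rev_lt_rev.mpr hk2
    rwa [Fin.rev_rev] at h
  · intro e; apply hk1; rw [← Fin.rev_rev k, e]
  · intro x hx
    have hxV : x ∈ V := hMV _ hx
    by_contra hxu
    rw [Finset.mem_union] at hxu
    push_neg at hxu
    have hmem : x ∈ (fun j : Fin r => V \ M j.rev) j.rev ∩ (fun j : Fin r => V \ M j.rev) i.rev := by
      simp only [Finset.mem_inter, Finset.mem_sdiff, Fin.rev_rev]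
      exact ⟨⟨hxV, hxu.2⟩, hxV, hxu.1⟩
    have hmem2 := hk3 hmem
    simp only [Finset.mem_sdiff] at hmem2
    exact hmem2.2 hx

end Helpers

/-- a flag complex satisfies the strong gcd-condition iff its
Alexander dual is shellable. -/
theorem stmt18 {α : Type*} [DecidableEq α] (V : Finset α) (Δ : Set (Finset α))
    (hΔ : IsComplex V Δ) (hghost : ∀ v ∈ V, ({v} : Finset α) ∈ Δ)
    (hflag : ∀ N, IsMinNonFace V Δ N → N.card = 2) :
    (∃ (r : ℕ) (M : Fin r → Finset α),
        Function.Injective M ∧ (∀ i, IsMinNonFace V Δ (M i)) ∧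
        (∀ N, IsMinNonFace V Δ N → ∃ i, M i = N) ∧
        IsStrongGcdOrder M) ↔
    (∃ (r : ℕ) (F : Fin r → Finset α),
        Function.Injective F ∧ (∀ i, IsFacet (AlexanderDual V Δ) (F i)) ∧
        (∀ G, IsFacet (AlexanderDual V Δ) G → ∃ i, F i = G) ∧
        IsShellingOrder F) := by
  constructor
  · rintro ⟨r, M, hinj, hmin, hsurj, hgcd⟩
    have hMV : ∀ i, M i ⊆ V := fun i => (hmin i).1
    have hM2 : ∀ i, (M i).card = 2 := fun i => hflag _ (hmin i)
    refine ⟨r, fun j => V \ M j.rev, ?_, ?_, ?_, ?_⟩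
    · intro a b e
      have e2 : M a.rev = M b.rev := by
        have := congrArg (fun S => V \ S) e
        simpa [Finset.sdiff_sdiff_eq_self (hMV a.rev),
          Finset.sdiff_sdiff_eq_self (hMV b.rev)] using this
      have := hinj e2
      exact Fin.rev_injective this
    · intro j
      exact (dual_facet_iff V Δ _).mpr ⟨M j.rev, hmin _, rfl⟩
    · intro G hG
      obtain ⟨N, hN, rfl⟩ := (dual_facet_iff V Δ G).mp hG
      obtain ⟨i, rfl⟩ := hsurj N hN
      exact ⟨i.rev, by show V \ M i.rev.rev = V \ M i; rw [Fin.rev_rev]⟩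
    · exact weak_to_shelling (M := fun j => M j.rev) (fun i => hMV _) (fun i => hM2 _)
        (hinj.comp Fin.rev_injective) (gcd_to_weak hMV hgcd)
  · rintro ⟨r, F, hinjF, hfac, hsurjF, hshell⟩
    choose N hN1 hN2 using fun i => (dual_facet_iff V Δ (F i)).mp (hfac i)
    have hNV : ∀ i, N i ⊆ V := fun i => (hN1 i).1
    have hN2' : ∀ i, (N i).card = 2 := fun i => hflag _ (hN1 i)
    have hNinj : Function.Injective N := by
      intro a b e
      exact hinjF (by rw [hN2, hN2, e])
    have hFeq : F = fun i => V \ N i := funext hN2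
    have hweak : IsWeakShellingOrder V (fun i => V \ N i) := by
      rw [← hFeq]
      have hs : IsShellingOrder (fun i => V \ N i) := by rw [← hFeq]; exact hshell
      rw [hFeq]
      exact shelling_to_weak hNV hN2' hNinj hs
    refine ⟨r, fun j => N j.rev, ?_, fun i => hN1 _, ?_, ?_⟩
    · intro a b e
      exact Fin.rev_injective (hNinj e)
    · intro P hP
      have hPfac : IsFacet (AlexanderDual V Δ) (V \ P) := (dual_facet_iff V Δ _).mpr ⟨P, hP, rfl⟩
      obtain ⟨i, hi⟩ := hsurjF _ hPfac
      have e : N i = P := by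
        have h1 : V \ N i = V \ P := by rw [← hN2 i, hi]
        have := congrArg (fun S => V \ S) h1
        simpa [Finset.sdiff_sdiff_eq_self (hNV i), Finset.sdiff_sdiff_eq_self hP.1] using this
      exact ⟨i.rev, by show N i.rev.rev = P; rw [Fin.rev_rev, e]⟩
    · have hw2 : IsWeakShellingOrder V (fun j : Fin r => V \ N j.rev.rev) := by
        have e1 : (fun j : Fin r => V \ N j.rev.rev) = fun i => V \ N i :=
          funext fun j => by rw [Fin.rev_rev]
        rw [e1]; exact hweak
      exact weak_to_gcd (M := fun j => N j.rev) (fun i => hNV _) hw2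
end
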